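/- Let x, y ∈ ℝ^d and let τ > 0 and φ ≥ 0 satisfy ‖y‖₁ ≥ τ, ‖x − y‖₁ ≤ φ, and φ < τ. Then x ≠ 0 and ‖ x/‖x‖₁ − y/‖y‖₁ ‖₁ ≤ 2φ/(τ − φ). -/

import Mathlib

open BigOperators

/-- If `‖y‖₁ ≥ τ > 0`, `‖x - y‖₁ ≤ φ` and `φ < τ`, then `x ≠ 0` and
`‖x/‖x‖₁ - y/‖y‖₁‖₁ ≤ 2φ/(τ - φ)`. -/
theorem stmt_4 {d : ℕ} (x y : Fin d → ℝ) (τ φ : ℝ)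
    (hτ : 0 < τ) (hφ : 0 ≤ φ)
    (hy : τ ≤ ∑ i, |y i|)
    (hxy : ∑ i, |x i - y i| ≤ φ)
    (hφτ : φ < τ) :
    x ≠ 0 ∧
      ∑ i, |x i / (∑ j, |x j|) - y i / (∑ j, |y j|)| ≤ 2 * φ / (τ - φ) := by
  set a := ∑ j, |x j| with ha_def
  set b := ∑ j, |y j| with hb_def
  have hb : 0 < b := lt_of_lt_of_le hτ hy
  have hab : |a - b| ≤ φ := by
    have h1 : |a - b| ≤ ∑ i, |x i - y i| := by
      rw [ha_def, hb_def, ← Finset.sum_sub_distrib]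
      calc |∑ i, (|x i| - |y i|)| ≤ ∑ i, abs (|x i| - |y i|) :=
            Finset.abs_sum_le_sum_abs _ _
        _ ≤ ∑ i, |x i - y i| :=
            Finset.sum_le_sum fun i _ => abs_abs_sub_abs_le_abs_sub _ _
    linarith
  have ha : τ - φ ≤ a := by
    have := abs_le.mp hab
    linarith
  have ha0 : 0 < a := lt_of_lt_of_le (by linarith) ha
  constructor
  · intro hx
    have : a = 0 := by rw [ha_def]; simp [hx]
    linarith
  · have key : ∀ i, |x i / a - y i / b| ≤ |x i - y i| / a + |y i| * |1/a - 1/b| := by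
      intro i
      have h : x i / a - y i / b = (x i - y i)/a + y i * (1/a - 1/b) := by
        field_simp; ring
      rw [h]
      calc |(x i - y i)/a + y i * (1/a - 1/b)|
          ≤ |(x i - y i)/a| + |y i * (1/a-1/b)| := abs_add_le _ _
        _ = |x i - y i|/a + |y i| * |1/a-1/b| := by
            rw [abs_div, abs_of_pos ha0, abs_mul]
    calc ∑ i, |x i / a - y i / b|
        ≤ ∑ i, (|x i - y i|/a + |y i| * |1/a-1/b|) :=
          Finset.sum_le_sum fun i _ => key i
      _ = (∑ i, |x i - y i|)/a + b * |1/a - 1/b| := by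
          rw [Finset.sum_add_distrib, ← Finset.sum_div, ← Finset.sum_mul]
      _ ≤ φ/a + b * (|b - a|/(a*b)) := by
          have h : |1/a - 1/b| = |b - a|/(a*b) := by
            rw [div_sub_div _ _ ha0.ne' hb.ne', abs_div,
              abs_of_pos (mul_pos ha0 hb)]
            norm_num
          rw [h]
          gcongr
      _ = φ/a + |b-a|/a := by field_simp
      _ ≤ φ/a + φ/a := by
          gcongr
          rwa [abs_sub_comm]
      _ ≤ 2*φ/(τ-φ) := by
          rw [← add_div, div_le_div_iff₀ ha0 (by linarith)]
          nlinarith
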